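/- arXiv:2112.03100 — 3 statements merged into one kernel-verified Lean document; each statement's English description precedes it below -/
import Mathlib

section
/- Let (Ω, μ) be a probability space and let W : Ω → γ, C : Ω → δ, and Z : Ω → ε be measurable maps into nonempty standard Borel spaces. Assume W and C are conditionally independent given the σ-algebra generated by Z. Then for (μ.map ⟨Z, C⟩)-almost every (z, c) ∈ ε × δ, the regular conditional distribution of W given the pair ⟨Z, C⟩, evaluated at (z, c), equals the regular conditional distribution of W given Z, evaluated at z. -/
open MeasureTheory ProbabilityTheory Set

/-- Auxiliary rectangle-level identity: if the conditional-expectation product rule holds for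
`U` and `B` given `σ(Z)`, then the measure of `(A ∩ B) ∩ U` disintegrates through
`condDistrib W Z μ`. -/
lemma lintegral_condDistrib_inter_aux
    {Ω γ ε : Type*} [MeasurableSpace Ω]
    [MeasurableSpace γ] [StandardBorelSpace γ] [Nonempty γ]
    [MeasurableSpace ε]
    (μ : Measure Ω) [IsProbabilityMeasure μ]
    (W : Ω → γ) (Z : Ω → ε) (hW : Measurable W) (hZ : Measurable Z)
    {A B : Set Ω} {u : Set γ}
    (hA : MeasurableSet[MeasurableSpace.comap Z inferInstance] A)
    (hB : MeasurableSet B) (hu : MeasurableSet u)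
    (h_indep : (μ⟦W ⁻¹' u ∩ B | MeasurableSpace.comap Z inferInstance⟧) =ᵐ[μ]
      fun ω => (μ⟦W ⁻¹' u | MeasurableSpace.comap Z inferInstance⟧) ω *
        (μ⟦B | MeasurableSpace.comap Z inferInstance⟧) ω) :
    μ ((A ∩ B) ∩ W ⁻¹' u)
      = ∫⁻ ω in A ∩ B, condDistrib W Z μ (Z ω) u ∂μ := by
  have hm' : MeasurableSpace.comap Z inferInstance ≤ ‹MeasurableSpace Ω› := hZ.comap_le
  have hAm : MeasurableSet A := hm' _ hA
  have hU : MeasurableSet (W ⁻¹' u) := hW hu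
  set f : Ω → ℝ := μ[(W ⁻¹' u).indicator (fun _ => (1 : ℝ))|MeasurableSpace.comap Z inferInstance]
    with hf_def
  set b : Ω → ℝ := μ[B.indicator (fun _ => (1 : ℝ))|MeasurableSpace.comap Z inferInstance]
    with hb_def
  have hg_meas : Measurable (fun ω => condDistrib W Z μ (Z ω) u) :=
    (Kernel.measurable_coe _ hu).comp hZ
  have h_left_ne : μ ((A ∩ B) ∩ W ⁻¹' u) ≠ ⊤ := measure_ne_top _ _
  have h_right_le : ∫⁻ ω in A ∩ B, condDistrib W Z μ (Z ω) u ∂μ ≤ μ (A ∩ B) := by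
    calc ∫⁻ ω in A ∩ B, condDistrib W Z μ (Z ω) u ∂μ ≤ ∫⁻ _ in A ∩ B, 1 ∂μ :=
          lintegral_mono fun ω => prob_le_one
      _ = μ (A ∩ B) := by simp
  have h_right_ne : ∫⁻ ω in A ∩ B, condDistrib W Z μ (Z ω) u ∂μ ≠ ⊤ :=
    ne_of_lt (lt_of_le_of_lt h_right_le (measure_lt_top _ _))
  rw [← ENNReal.toReal_eq_toReal_iff' h_left_ne h_right_ne]
  -- left side
  have h_left : (μ ((A ∩ B) ∩ W ⁻¹' u)).toReal = ∫ ω in A, (fun ω => f ω * b ω) ω ∂μ := by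
    have h1 : (μ ((A ∩ B) ∩ W ⁻¹' u)).toReal
        = ∫ ω in A, ((W ⁻¹' u ∩ B).indicator (fun _ => (1 : ℝ))) ω ∂μ := by
      rw [setIntegral_indicator (hU.inter hB), setIntegral_const, smul_eq_mul, mul_one]
      congr 1
      rw [Set.inter_comm (W ⁻¹' u) B, ← Set.inter_assoc]
    have h_ind_int : Integrable ((W ⁻¹' u ∩ B).indicator (fun _ => (1 : ℝ))) μ :=
      (integrable_const (1 : ℝ)).indicator (hU.inter hB)
    rw [h1, ← setIntegral_condExp hm' h_ind_int hA]
    exact setIntegral_congr_ae (hm' _ hA) (h_indep.mono fun ω hω _ => hω)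
  -- right side
  have h_cd := condDistrib_ae_eq_condExp (μ := μ) hZ hW hu
  have h_right :
      (∫⁻ ω in A ∩ B, condDistrib W Z μ (Z ω) u ∂μ).toReal
        = ∫ ω in A, (fun ω => f ω * b ω) ω ∂μ := by
    have h2 : ∫ ω in A ∩ B, (condDistrib W Z μ (Z ω) u).toReal ∂μ
        = (∫⁻ ω in A ∩ B, condDistrib W Z μ (Z ω) u ∂μ).toReal := by
      refine integral_toReal hg_meas.aemeasurable.restrict ?_
      exact Filter.Eventually.of_forall fun ω => measure_lt_top _ _
    rw [← h2]
    have h3 : ∫ ω in A ∩ B, (condDistrib W Z μ (Z ω) u).toReal ∂μ = ∫ ω in A ∩ B, f ω ∂μ :=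
      setIntegral_congr_ae (hAm.inter hB) (h_cd.mono fun ω hω _ => hω)
    rw [h3, ← setIntegral_indicator hB]
    have h4 : B.indicator f = fun ω => f ω * (B.indicator (fun _ => (1 : ℝ))) ω := by
      funext ω
      by_cases hω : ω ∈ B <;> simp [Set.indicator_apply, hω]
    rw [h4]
    have h_int_mul : Integrable (fun ω => f ω * (B.indicator (fun _ => (1 : ℝ))) ω) μ := by
      rw [← h4]; exact integrable_condExp.indicator hB
    rw [← setIntegral_condExp hm' h_int_mul hA]
    refine setIntegral_congr_ae (hm' _ hA) ?_
    have h5 : MeasureTheory.condExp (MeasurableSpace.comap Z inferInstance) μ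
          (fun ω => f ω * (B.indicator (fun _ => (1 : ℝ))) ω)
        =ᵐ[μ] fun ω => f ω * b ω := by
      have := condExp_mul_of_stronglyMeasurable_left (m := MeasurableSpace.comap Z inferInstance) (μ := μ)
        (f := f) (g := B.indicator (fun _ => (1 : ℝ)))
        stronglyMeasurable_condExp (by simpa [Pi.mul_def] using h_int_mul)
        ((integrable_const (1 : ℝ)).indicator hB)
      exact this
    exact h5.mono fun ω hω _ => hω
  rw [h_left, h_right]

/-- If `W` and `C` are conditionally independent given `σ(Z)`, then conditioning `W` on the
pair `⟨Z, C⟩` gives almost everywhere the same result as conditioning on `Z` alone. -/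
theorem condDistrib_pair_of_condIndepFun
    {Ω γ δ ε : Type*} [MeasurableSpace Ω] [StandardBorelSpace Ω]
    [MeasurableSpace γ] [StandardBorelSpace γ] [Nonempty γ]
    [MeasurableSpace δ] [StandardBorelSpace δ] [Nonempty δ]
    [MeasurableSpace ε] [StandardBorelSpace ε] [Nonempty ε]
    (μ : Measure Ω) [IsProbabilityMeasure μ]
    (W : Ω → γ) (C : Ω → δ) (Z : Ω → ε)
    (hW : Measurable W) (hC : Measurable C) (hZ : Measurable Z)
    (hWC : CondIndepFun (MeasurableSpace.comap Z inferInstance) hZ.comap_le W C μ) :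
    ∀ᵐ p ∂(μ.map fun ω => (Z ω, C ω)),
      condDistrib W (fun ω => (Z ω, C ω)) μ p = condDistrib W Z μ p.1 := by
  have hZC : Measurable fun ω => (Z ω, C ω) := hZ.prodMk hC
  set ν := μ.map (fun ω => (Z ω, C ω)) with hν_def
  set κ : Kernel (ε × δ) γ := (condDistrib W Z μ).comap Prod.fst measurable_fst with hκ_def
  have hκ_meas : ∀ {u : Set γ}, MeasurableSet u → Measurable fun p : ε × δ => κ p u :=
    fun hu => Kernel.measurable_coe _ hu
  have h_indep_all := (condIndepFun_iff_condExp_inter_preimage_eq_mul hW hC).mp hWC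
  -- the key identity for general measurable `s` and `u`
  have h_sect : ∀ {u : Set γ}, MeasurableSet u → ∀ {s : Set (ε × δ)}, MeasurableSet s →
      μ ((fun ω => (Z ω, C ω)) ⁻¹' s ∩ W ⁻¹' u) = ∫⁻ p in s, κ p u ∂ν := by
    intro u hu
    set ρ₁ : Measure (ε × δ) := (μ.restrict (W ⁻¹' u)).map (fun ω => (Z ω, C ω)) with hρ₁
    set ρ₂ : Measure (ε × δ) := ν.withDensity (fun p => κ p u) with hρ₂
    have hρ₁_apply : ∀ {s : Set (ε × δ)}, MeasurableSet s →
        ρ₁ s = μ ((fun ω => (Z ω, C ω)) ⁻¹' s ∩ W ⁻¹' u) := by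
      intro s hs
      rw [hρ₁, Measure.map_apply hZC hs, Measure.restrict_apply (hZC hs)]
    have hρ₂_apply : ∀ {s : Set (ε × δ)}, MeasurableSet s →
        ρ₂ s = ∫⁻ p in s, κ p u ∂ν := by
      intro s hs
      rw [hρ₂, withDensity_apply _ hs]
    have h_rect : ∀ {t₁ : Set ε} {t₂ : Set δ}, MeasurableSet t₁ → MeasurableSet t₂ →
        ρ₁ (t₁ ×ˢ t₂) = ρ₂ (t₁ ×ˢ t₂) := by
      intro t₁ t₂ ht₁ ht₂
      rw [hρ₁_apply (ht₁.prod ht₂), hρ₂_apply (ht₁.prod ht₂), Set.mk_preimage_prod,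
        hν_def, setLIntegral_map (ht₁.prod ht₂) (hκ_meas hu) hZC, Set.mk_preimage_prod]
      have hcomap : ∀ ω, κ (Z ω, C ω) u = condDistrib W Z μ (Z ω) u := fun ω => by
        rw [hκ_def, Kernel.comap_apply]
      simp_rw [hcomap]
      exact lintegral_condDistrib_inter_aux μ W Z hW hZ ⟨t₁, ht₁, rfl⟩ (hC ht₂) hu
        (h_indep_all u t₂ hu ht₂)
    have h_eq : ρ₁ = ρ₂ := by
      have : IsFiniteMeasure ρ₂ := by
        constructor
        rw [hρ₂_apply MeasurableSet.univ]
        calc ∫⁻ p in Set.univ, κ p u ∂ν ≤ ∫⁻ _ in Set.univ, 1 ∂ν :=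
              lintegral_mono fun p => prob_le_one
          _ < ⊤ := by simp
      refine MeasureTheory.ext_of_generate_finite _ generateFrom_prod.symm isPiSystem_prod ?_ ?_
      · rintro _ ⟨t₁, ht₁, t₂, ht₂, rfl⟩
        exact h_rect ht₁ ht₂
      · have := h_rect (MeasurableSet.univ (α := ε)) (MeasurableSet.univ (α := δ))
        simpa [Set.univ_prod_univ] using this
    intro s hs
    rw [← hρ₁_apply hs, ← hρ₂_apply hs, h_eq]
  -- the compProd characterization
  have key : μ.map (fun ω => ((Z ω, C ω), W ω)) = ν ⊗ₘ κ := by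
    refine MeasureTheory.ext_of_generate_finite _ generateFrom_prod.symm isPiSystem_prod ?_ ?_
    · rintro _ ⟨s, hs, t, ht, rfl⟩
      replace hs : MeasurableSet s := hs
      replace ht : MeasurableSet t := ht
      rw [Measure.map_apply (hZC.prodMk hW) (hs.prod ht), Set.mk_preimage_prod,
        Measure.compProd_apply_prod hs ht]
      exact h_sect ht hs
    · have hp₁ : IsProbabilityMeasure (μ.map fun ω => ((Z ω, C ω), W ω)) :=
        Measure.isProbabilityMeasure_map (hZC.prodMk hW).aemeasurable
      have hp₂ : IsProbabilityMeasure ν := Measure.isProbabilityMeasure_map hZC.aemeasurable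
      have hp₃ : IsProbabilityMeasure (ν ⊗ₘ κ) := by infer_instance
      rw [hp₁.measure_univ, hp₃.measure_univ]
  have h := condDistrib_ae_eq_of_measure_eq_compProd_of_measurable hZC hW key
  filter_upwards [h] with p hp
  rw [hp, hκ_def, Kernel.comap_apply]
end

section
/- Let (Ω, μ) be a probability space with measurable maps S : Ω → σ (current state), T : Ω → τ (desired time until achievement), C : Ω → γc (controllable part S'^c of the next state) and W : Ω → γe (environment part S'^e of the next state) into nonempty standard Borel spaces. Assume W and C are conditionally independent given the σ-algebra generated by the pair ⟨S, T⟩. Let κ denote the regular conditional distribution of W given ⟨S, T⟩ under μ. Then for (μ.map ⟨S, C, T⟩)-almost every (s, c, t), the regular conditional distribution of the triple (C, W, T) given ⟨S, C, T⟩, evaluated at (s, c, t), equals the product measure δ_c ⊗ κ(s, t) ⊗ δ_t. -/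
open MeasureTheory ProbabilityTheory MeasurableSpace Set

open scoped ENNReal

/-- The σ-algebra generated by the pair `⟨S, T⟩`. -/
abbrev pairComap {Ω σ τ : Type*} [MeasurableSpace σ] [MeasurableSpace τ]
    (S : Ω → σ) (T : Ω → τ) : MeasurableSpace Ω :=
  MeasurableSpace.comap (fun ω => (S ω, T ω)) inferInstance

/-- Key step: under conditional independence of `W` and `C` given `⟨S, T⟩`, the measure of
`G ∩ W ⁻¹' B` for `G` measurable w.r.t. `σ(S, C, T)` is computed by integrating
`κ (S ω, T ω) B` over `G`, where `κ = condDistrib W ⟨S, T⟩ μ`. -/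
lemma star_lemma
    {Ω σ τ γc γe : Type*} [MeasurableSpace Ω] [StandardBorelSpace Ω]
    [MeasurableSpace σ] [MeasurableSpace τ]
    [MeasurableSpace γc] [MeasurableSpace γe] [Nonempty γe] [StandardBorelSpace γe]
    (μ : Measure Ω) [IsProbabilityMeasure μ]
    (S : Ω → σ) (T : Ω → τ) (C : Ω → γc) (W : Ω → γe)
    (hS : Measurable S) (hT : Measurable T) (hC : Measurable C) (hW : Measurable W)
    (hWC : CondIndepFun (MeasurableSpace.comap (fun ω => (S ω, T ω)) inferInstance)
      ((hS.prodMk hT).comap_le) W C μ)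
    {B : Set γe} (hB : MeasurableSet B)
    {G : Set Ω}
    (hG : MeasurableSet[MeasurableSpace.comap (fun ω => (S ω, C ω, T ω)) inferInstance] G) :
    μ (G ∩ W ⁻¹' B)
      = ∫⁻ ω in G, condDistrib W (fun ω => (S ω, T ω)) μ (S ω, T ω) B ∂μ := by
  set κ := condDistrib W (fun ω => (S ω, T ω)) μ with hκdef
  have hm' : pairComap S T ≤ ‹MeasurableSpace Ω› := (hS.prodMk hT).comap_le
  have hX : Measurable fun ω => (S ω, C ω, T ω) := hS.prodMk (hC.prodMk hT)
  set f' : Ω → ℝ≥0∞ := fun ω => κ (S ω, T ω) B with hf'def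
  have hf'_meas : Measurable f' := (Kernel.measurable_coe κ hB).comp (hS.prodMk hT)
  have hf'_le : ∀ ω, f' ω ≤ 1 := fun ω => prob_le_one
  have hν₂fin : IsFiniteMeasure (μ.withDensity f') := by
    refine isFiniteMeasure_withDensity (lt_top_iff_ne_top.mp ?_)
    calc ∫⁻ ω, f' ω ∂μ ≤ ∫⁻ _, 1 ∂μ := lintegral_mono hf'_le
    _ = 1 := by simp
    _ < ⊤ := by simp
  -- key computation on rectangles, via conditional independence
  have key : ∀ (A₁ : Set σ) (A₂ : Set γc) (A₃ : Set τ), MeasurableSet A₁ → MeasurableSet A₂ →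
      MeasurableSet A₃ →
      μ.restrict (W ⁻¹' B) (S ⁻¹' A₁ ∩ C ⁻¹' A₂ ∩ T ⁻¹' A₃)
        = μ.withDensity f' (S ⁻¹' A₁ ∩ C ⁻¹' A₂ ∩ T ⁻¹' A₃) := by
    intro A₁ A₂ A₃ hA₁ hA₂ hA₃
    have hset : MeasurableSet (S ⁻¹' A₁ ∩ C ⁻¹' A₂ ∩ T ⁻¹' A₃) :=
      ((hS hA₁).inter (hC hA₂)).inter (hT hA₃)
    have hG'm : MeasurableSet[pairComap S T] (S ⁻¹' A₁ ∩ T ⁻¹' A₃) := by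
      refine ⟨A₁ ×ˢ A₃, hA₁.prod hA₃, ?_⟩
      ext ω; simp [Set.mem_prod]
    have hG'0 : MeasurableSet (S ⁻¹' A₁ ∩ T ⁻¹' A₃) := (hS hA₁).inter (hT hA₃)
    set g : Ω → ℝ := (C ⁻¹' A₂).indicator (fun _ => (1 : ℝ)) with hgdef
    set fR : Ω → ℝ := fun ω => (f' ω).toReal with hfRdef
    have hg_int : Integrable g μ := (integrable_const (1 : ℝ)).indicator (hC hA₂)
    have hfR_meas' : Measurable[pairComap S T] f' := by
      have h1 : Measurable[pairComap S T] fun ω => (S ω, T ω) := Measurable.of_comap_le le_rfl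
      exact (Kernel.measurable_coe κ hB).comp h1
    have hfR_sm : StronglyMeasurable[pairComap S T] fR :=
      (@Measurable.ennreal_toReal _ (pairComap S T) _ hfR_meas').stronglyMeasurable
    have hfR_bound : ∀ ω, ‖fR ω‖ ≤ 1 := by
      intro ω
      rw [Real.norm_eq_abs, abs_of_nonneg ENNReal.toReal_nonneg]
      exact ENNReal.toReal_le_of_le_ofReal one_pos.le (by simpa using hf'_le ω)
    have hfg_int : Integrable (fR * g) μ :=
      hg_int.bdd_mul ((hfR_sm.mono hm').aestronglyMeasurable) (Filter.Eventually.of_forall hfR_bound)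
    have hE : MeasurableSet (W ⁻¹' B ∩ C ⁻¹' A₂) := (hW hB).inter (hC hA₂)
    have hE_int : Integrable ((W ⁻¹' B ∩ C ⁻¹' A₂).indicator fun _ => (1 : ℝ)) μ :=
      (integrable_const (1 : ℝ)).indicator hE
    have e1 : ((μ.restrict (W ⁻¹' B)) (S ⁻¹' A₁ ∩ C ⁻¹' A₂ ∩ T ⁻¹' A₃)).toReal
        = ∫ ω in S ⁻¹' A₁ ∩ T ⁻¹' A₃,
            (W ⁻¹' B ∩ C ⁻¹' A₂).indicator (fun _ => (1 : ℝ)) ω ∂μ := by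
      have hseteq : W ⁻¹' B ∩ C ⁻¹' A₂ ∩ (S ⁻¹' A₁ ∩ T ⁻¹' A₃)
          = S ⁻¹' A₁ ∩ C ⁻¹' A₂ ∩ T ⁻¹' A₃ ∩ W ⁻¹' B := by
        ext ω; simp; tauto
      rw [integral_indicator_const _ hE, measureReal_def, Measure.restrict_apply hE, smul_eq_mul, mul_one,
        Measure.restrict_apply hset, hseteq]
    have e2 : ∫ ω in S ⁻¹' A₁ ∩ T ⁻¹' A₃,
          (W ⁻¹' B ∩ C ⁻¹' A₂).indicator (fun _ => (1 : ℝ)) ω ∂μ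
        = ∫ ω in S ⁻¹' A₁ ∩ T ⁻¹' A₃, (μ⟦W ⁻¹' B ∩ C ⁻¹' A₂|pairComap S T⟧) ω ∂μ :=
      (setIntegral_condExp hm' hE_int hG'm).symm
    have h3 : (μ⟦W ⁻¹' B ∩ C ⁻¹' A₂|pairComap S T⟧)
        =ᵐ[μ] fun ω => (μ⟦W ⁻¹' B|pairComap S T⟧) ω * (μ⟦C ⁻¹' A₂|pairComap S T⟧) ω :=
      (condIndepFun_iff_condExp_inter_preimage_eq_mul hW hC).mp hWC B A₂ hB hA₂
    have h4 : (fun ω => (κ (S ω, T ω) B).toReal) =ᵐ[μ] μ⟦W ⁻¹' B|pairComap S T⟧ :=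
      condDistrib_ae_eq_condExp (hS.prodMk hT) hW hB
    have h5 : μ[fR * g|pairComap S T] =ᵐ[μ] fR * μ[g|pairComap S T] :=
      condExp_mul_of_stronglyMeasurable_left hfR_sm hfg_int hg_int
    have e3 : ∫ ω in S ⁻¹' A₁ ∩ T ⁻¹' A₃, (μ⟦W ⁻¹' B ∩ C ⁻¹' A₂|pairComap S T⟧) ω ∂μ
        = ∫ ω in S ⁻¹' A₁ ∩ T ⁻¹' A₃, (μ[fR * g|pairComap S T]) ω ∂μ := by
      refine setIntegral_congr_ae hG'0 ?_
      filter_upwards [h3, h4.symm, h5] with ω h3ω h4ω h5ω _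
      rw [h3ω, h5ω, Pi.mul_apply, h4ω]
    have e4 : ∫ ω in S ⁻¹' A₁ ∩ T ⁻¹' A₃, (μ[fR * g|pairComap S T]) ω ∂μ
        = ∫ ω in S ⁻¹' A₁ ∩ T ⁻¹' A₃, (fR * g) ω ∂μ :=
      setIntegral_condExp hm' hfg_int hG'm
    have e5 : ∫ ω in S ⁻¹' A₁ ∩ T ⁻¹' A₃, (fR * g) ω ∂μ
        = ∫ ω in (S ⁻¹' A₁ ∩ T ⁻¹' A₃) ∩ C ⁻¹' A₂, fR ω ∂μ := by
      rw [← setIntegral_indicator (hC hA₂)]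
      congr 1
      ext ω
      by_cases hω : C ω ∈ A₂ <;> simp [hgdef, Set.indicator_apply, hω]
    have e6 : ∫ ω in (S ⁻¹' A₁ ∩ T ⁻¹' A₃) ∩ C ⁻¹' A₂, fR ω ∂μ
        = ((μ.withDensity f') (S ⁻¹' A₁ ∩ C ⁻¹' A₂ ∩ T ⁻¹' A₃)).toReal := by
      rw [withDensity_apply _ hset]
      have hsets : S ⁻¹' A₁ ∩ C ⁻¹' A₂ ∩ T ⁻¹' A₃ = (S ⁻¹' A₁ ∩ T ⁻¹' A₃) ∩ C ⁻¹' A₂ := by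
        ext ω; simp; tauto
      rw [hsets]
      exact integral_toReal (hf'_meas.aemeasurable.restrict)
        (Filter.Eventually.of_forall fun ω => lt_of_le_of_lt (hf'_le ω) (by simp))
    have h6 : ((μ.restrict (W ⁻¹' B)) (S ⁻¹' A₁ ∩ C ⁻¹' A₂ ∩ T ⁻¹' A₃)).toReal
        = ((μ.withDensity f') (S ⁻¹' A₁ ∩ C ⁻¹' A₂ ∩ T ⁻¹' A₃)).toReal := by
      rw [e1, e2, e3, e4, e5, e6]
    exact (ENNReal.toReal_eq_toReal_iff' (measure_ne_top _ _) (measure_ne_top _ _)).mp h6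
  -- extend from rectangles to all of `σ(S, C, T)` by the π-λ theorem
  have hgen : (MeasurableSpace.comap (fun ω => (S ω, C ω, T ω)) inferInstance
        : MeasurableSpace Ω)
      = MeasurableSpace.generateFrom
          (Set.preimage (fun ω => (S ω, C ω, T ω)) ''
            (Set.image2 (· ×ˢ ·) {s : Set σ | MeasurableSet s}
              (Set.image2 (· ×ˢ ·) {s : Set γc | MeasurableSet s}
                {s : Set τ | MeasurableSet s}))) := by
    conv_lhs => rw [show (inferInstance : MeasurableSpace (σ × γc × τ))
      = MeasurableSpace.generateFrom
          (Set.image2 (· ×ˢ ·) {s : Set σ | MeasurableSet s}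
            (Set.image2 (· ×ˢ ·) {s : Set γc | MeasurableSet s}
              {s : Set τ | MeasurableSet s})) from
        (generateFrom_eq_prod generateFrom_measurableSet generateFrom_prod
          isCountablySpanning_measurableSet
          (isCountablySpanning_measurableSet.prod isCountablySpanning_measurableSet)).symm]
    rw [MeasurableSpace.comap_generateFrom]
  have hpi : IsPiSystem (Set.preimage (fun ω => (S ω, C ω, T ω)) ''
      (Set.image2 (· ×ˢ ·) {s : Set σ | MeasurableSet s}
        (Set.image2 (· ×ˢ ·) {s : Set γc | MeasurableSet s} {s : Set τ | MeasurableSet s}))) := by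
    have h := (isPiSystem_measurableSet (α := σ)).prod
      ((isPiSystem_measurableSet (α := γc)).prod (isPiSystem_measurableSet (α := τ))) |>.comap
      (fun ω => (S ω, C ω, T ω))
    convert h using 1
    rfl

  have hGm0 : MeasurableSet G := hX.comap_le _ hG
  have huniv : (μ.restrict (W ⁻¹' B)) Set.univ = (μ.withDensity f') Set.univ := by
    have := key Set.univ Set.univ Set.univ MeasurableSet.univ MeasurableSet.univ
      MeasurableSet.univ
    simpa using this
  have hext := ext_on_measurableSpace_of_generate_finite ‹MeasurableSpace Ω›
    (μ := μ.restrict (W ⁻¹' B)) (ν := μ.withDensity f')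
    (Set.preimage (fun ω => (S ω, C ω, T ω)) ''
      (Set.image2 (· ×ˢ ·) {s : Set σ | MeasurableSet s}
        (Set.image2 (· ×ˢ ·) {s : Set γc | MeasurableSet s} {s : Set τ | MeasurableSet s})))
    (fun s hs => by
      obtain ⟨t, ht, rfl⟩ := hs
      obtain ⟨A₁, hA₁, u, hu, rfl⟩ := ht
      obtain ⟨A₂, hA₂, A₃, hA₃, rfl⟩ := hu
      have hpre : (fun ω => (S ω, C ω, T ω)) ⁻¹' (A₁ ×ˢ A₂ ×ˢ A₃)
          = S ⁻¹' A₁ ∩ C ⁻¹' A₂ ∩ T ⁻¹' A₃ := by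
        ext ω; simp [Set.mem_prod]; tauto
      rw [hpre]
      exact key A₁ A₂ A₃ hA₁ hA₂ hA₃)
    hX.comap_le hgen hpi huniv hG
  rw [Measure.restrict_apply hGm0] at hext
  rw [hext, withDensity_apply _ hGm0]


open MeasureTheory ProbabilityTheory

/-- Proposition 2 (main factorization): if the environment part `W = S'^e` of the next state is
conditionally independent of the controllable part `C = S'^c` given the pair
`(state, desired time) = ⟨S, T⟩`, then the conditional law of `(C, W, T)` given the relabeled
high-level transition data `⟨S, C, T⟩` factorizes as `δ_c ⊗ κ (s, t) ⊗ δ_t`, where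
`κ = condDistrib W ⟨S, T⟩ μ`. -/
theorem condDistrib_timed_subgoal_factorization
    {Ω σ τ γc γe : Type*} [MeasurableSpace Ω] [StandardBorelSpace Ω]
    [MeasurableSpace σ] [StandardBorelSpace σ] [Nonempty σ]
    [MeasurableSpace τ] [StandardBorelSpace τ] [Nonempty τ]
    [MeasurableSpace γc] [StandardBorelSpace γc] [Nonempty γc]
    [MeasurableSpace γe] [StandardBorelSpace γe] [Nonempty γe]
    (μ : Measure Ω) [IsProbabilityMeasure μ]
    (S : Ω → σ) (T : Ω → τ) (C : Ω → γc) (W : Ω → γe)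
    (hS : Measurable S) (hT : Measurable T) (hC : Measurable C) (hW : Measurable W)
    (hWC : CondIndepFun
      (MeasurableSpace.comap (fun ω => (S ω, T ω)) inferInstance)
      ((hS.prodMk hT).comap_le) W C μ) :
    ∀ᵐ p ∂(μ.map fun ω => (S ω, C ω, T ω)),
      condDistrib (fun ω => (C ω, W ω, T ω)) (fun ω => (S ω, C ω, T ω)) μ p
        = (Measure.dirac p.2.1).prod
            ((condDistrib W (fun ω => (S ω, T ω)) μ (p.1, p.2.2)).prod
              (Measure.dirac p.2.2)) := by
  have hX : Measurable fun ω => (S ω, C ω, T ω) := hS.prodMk (hC.prodMk hT)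
  have hY : Measurable fun ω => (C ω, W ω, T ω) := hC.prodMk (hW.prodMk hT)
  set κ := condDistrib W (fun ω => (S ω, T ω)) μ with hκdef
  have hm21 : Measurable fun p : σ × γc × τ => p.2.1 := measurable_fst.comp measurable_snd
  have hm22 : Measurable fun p : σ × γc × τ => p.2.2 := measurable_snd.comp measurable_snd
  have hm12 : Measurable fun p : σ × γc × τ => (p.1, p.2.2) := measurable_fst.prodMk hm22
  set κ' : Kernel (σ × γc × τ) (γc × γe × τ) :=
    (Kernel.deterministic (fun p : σ × γc × τ => p.2.1) hm21).prod
      ((κ.comap (fun p : σ × γc × τ => (p.1, p.2.2)) hm12).prod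
        (Kernel.deterministic (fun p : σ × γc × τ => p.2.2) hm22)) with hκ'def
  have hκ'app : ∀ p : σ × γc × τ, κ' p
      = (Measure.dirac p.2.1).prod ((κ (p.1, p.2.2)).prod (Measure.dirac p.2.2)) := by
    intro p
    rw [hκ'def, Kernel.prod_apply, Kernel.prod_apply, Kernel.deterministic_apply,
      Kernel.deterministic_apply, Kernel.comap_apply]
  haveI : IsProbabilityMeasure (μ.map fun ω => (S ω, C ω, T ω)) :=
    Measure.isProbabilityMeasure_map hX.aemeasurable
  haveI : IsProbabilityMeasure (μ.map fun ω =>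
      ((S ω, C ω, T ω), (C ω, W ω, T ω))) :=
    Measure.isProbabilityMeasure_map (hX.prodMk hY).aemeasurable
  -- the compProd identity
  have hκeq : μ.map (fun ω => ((S ω, C ω, T ω), (C ω, W ω, T ω)))
      = (μ.map fun ω => (S ω, C ω, T ω)) ⊗ₘ κ' := by
    have hgen : (Prod.instMeasurableSpace : MeasurableSpace ((σ × γc × τ) × γc × γe × τ))
        = MeasurableSpace.generateFrom
            (Set.image2 (· ×ˢ ·) {s : Set (σ × γc × τ) | MeasurableSet s}
              (Set.image2 (· ×ˢ ·) {s : Set γc | MeasurableSet s}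
                (Set.image2 (· ×ˢ ·) {s : Set γe | MeasurableSet s}
                  {s : Set τ | MeasurableSet s}))) :=
      (generateFrom_eq_prod generateFrom_measurableSet
        (generateFrom_eq_prod generateFrom_measurableSet generateFrom_prod
          isCountablySpanning_measurableSet
          (isCountablySpanning_measurableSet.prod isCountablySpanning_measurableSet))
        isCountablySpanning_measurableSet
        (isCountablySpanning_measurableSet.prod
          (isCountablySpanning_measurableSet.prod isCountablySpanning_measurableSet))).symm
    have hpi : IsPiSystem (Set.image2 (· ×ˢ ·) {s : Set (σ × γc × τ) | MeasurableSet s}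
        (Set.image2 (· ×ˢ ·) {s : Set γc | MeasurableSet s}
          (Set.image2 (· ×ˢ ·) {s : Set γe | MeasurableSet s}
            {s : Set τ | MeasurableSet s}))) :=
      isPiSystem_measurableSet.prod (isPiSystem_measurableSet.prod
        (isPiSystem_measurableSet.prod isPiSystem_measurableSet))
    refine ext_of_generate_finite _ hgen hpi ?_ (by simp)
    rintro s hs
    obtain ⟨A, hA, u, hu, rfl⟩ := hs
    obtain ⟨B₁, hB₁, v, hv, rfl⟩ := hu
    obtain ⟨B₂, hB₂, B₃, hB₃, rfl⟩ := hv
    simp only [Set.mem_setOf_eq] at hA hB₁ hB₂ hB₃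
    -- the good set on the ω-side
    set G : Set Ω := ((fun ω => (S ω, C ω, T ω)) ⁻¹' A) ∩ C ⁻¹' B₁ ∩ T ⁻¹' B₃ with hGdef
    have hGc : MeasurableSet[MeasurableSpace.comap (fun ω => (S ω, C ω, T ω))
        inferInstance] G := by
      refine ⟨A ∩ (Set.univ ×ˢ B₁ ×ˢ Set.univ) ∩ (Set.univ ×ˢ Set.univ ×ˢ B₃),
        (hA.inter (MeasurableSet.univ.prod (hB₁.prod MeasurableSet.univ))).inter
          (MeasurableSet.univ.prod (MeasurableSet.univ.prod hB₃)), ?_⟩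
      ext ω; simp [hGdef, Set.mem_prod]
    have hGm : MeasurableSet G := ((hX hA).inter (hC hB₁)).inter (hT hB₃)
    -- LHS
    have hL : μ.map (fun ω => ((S ω, C ω, T ω), (C ω, W ω, T ω)))
          (A ×ˢ B₁ ×ˢ B₂ ×ˢ B₃)
        = μ (G ∩ W ⁻¹' B₂) := by
      rw [Measure.map_apply (hX.prodMk hY) (hA.prod (hB₁.prod (hB₂.prod hB₃)))]
      congr 1
      ext ω; simp [hGdef, Set.mem_prod]; tauto
    rw [hL, star_lemma μ S T C W hS hT hC hW hWC hB₂ hGc]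
    -- RHS
    rw [Measure.compProd_apply_prod hA (hB₁.prod (hB₂.prod hB₃))]
    have hFmeas : Measurable fun p : σ × γc × τ => κ' p (B₁ ×ˢ B₂ ×ˢ B₃) :=
      Kernel.measurable_coe κ' (hB₁.prod (hB₂.prod hB₃))
    rw [setLIntegral_map hA hFmeas hX]
    symm
    have hint : ∀ ω, κ' (S ω, C ω, T ω) (B₁ ×ˢ B₂ ×ˢ B₃)
        = ((C ⁻¹' B₁ ∩ T ⁻¹' B₃).indicator
            (fun ω => κ (S ω, T ω) B₂)) ω := by
      intro ω
      rw [hκ'app, Measure.prod_prod, Measure.prod_prod,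
        Measure.dirac_apply' _ hB₁, Measure.dirac_apply' _ hB₃]
      by_cases h1 : C ω ∈ B₁ <;> by_cases h2 : T ω ∈ B₃ <;>
        simp [Set.indicator_apply, h1, h2]
    calc ∫⁻ ω in (fun ω => (S ω, C ω, T ω)) ⁻¹' A,
          κ' (S ω, C ω, T ω) (B₁ ×ˢ B₂ ×ˢ B₃) ∂μ
        = ∫⁻ ω in (fun ω => (S ω, C ω, T ω)) ⁻¹' A,
            (C ⁻¹' B₁ ∩ T ⁻¹' B₃).indicator (fun ω => κ (S ω, T ω) B₂) ω ∂μ := by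
          exact lintegral_congr fun ω => hint ω
      _ = ∫⁻ ω in (C ⁻¹' B₁ ∩ T ⁻¹' B₃) ∩ (fun ω => (S ω, C ω, T ω)) ⁻¹' A,
            κ (S ω, T ω) B₂ ∂μ := by
          rw [lintegral_indicator ((hC hB₁).inter (hT hB₃)),
            Measure.restrict_restrict ((hC hB₁).inter (hT hB₃))]
      _ = ∫⁻ ω in G, κ (S ω, T ω) B₂ ∂μ := by
          have hseteq : (C ⁻¹' B₁ ∩ T ⁻¹' B₃) ∩ (fun ω => (S ω, C ω, T ω)) ⁻¹' A = G := by
            rw [hGdef]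
            ext ω; simp only [Set.mem_inter_iff, Set.mem_preimage]; tauto
          rw [hseteq]
  have huniq := condDistrib_ae_eq_of_measure_eq_compProd (fun ω => (S ω, C ω, T ω)) hY.aemeasurable hκeq
  filter_upwards [huniq] with p hp
  rw [hp, hκ'app]
end

section
/- Let σ, τ, γc, γe be nonempty standard Borel spaces and let κ be a Markov kernel from σ × τ to γe. For i = 1, 2 let (Ωᵢ, μᵢ) be probability spaces with measurable maps Sᵢ : Ωᵢ → σ, Tᵢ : Ωᵢ → τ, Cᵢ : Ωᵢ → γc and Wᵢ : Ωᵢ → γe such that (a) Wᵢ and Cᵢ are conditionally independent given the σ-algebra generated by ⟨Sᵢ, Tᵢ⟩ with respect to μᵢ, and (b) the regular conditional distribution of Wᵢ given ⟨Sᵢ, Tᵢ⟩ under μᵢ is (μᵢ.map ⟨Sᵢ, Tᵢ⟩)-almost everywhere equal to κ. Then for each i and (μᵢ.map ⟨Sᵢ, Cᵢ, Tᵢ⟩)-almost every (s, c, t), the regular conditional distribution of (Cᵢ, Wᵢ, Tᵢ) given ⟨Sᵢ, Cᵢ, Tᵢ⟩, evaluated at (s, c, t), equals the product measure δ_c ⊗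 κ(s, t) ⊗ δ_t; in particular both conditional distributions are almost everywhere equal to one and the same kernel, independent of i. -/
open MeasureTheory ProbabilityTheory

section Aux

open MeasurableSpace Set
open scoped ENNReal

variable {σ τ γc γe Ω : Type*}
  [MeasurableSpace σ] [StandardBorelSpace σ] [Nonempty σ]
  [MeasurableSpace τ] [StandardBorelSpace τ] [Nonempty τ]
  [MeasurableSpace γc] [StandardBorelSpace γc] [Nonempty γc]
  [MeasurableSpace γe] [StandardBorelSpace γe] [Nonempty γe]
  [MeasurableSpace Ω] [StandardBorelSpace Ω]

lemma star_rect (κ : Kernel (σ × τ) γe) [IsMarkovKernel κ]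
    (μ : Measure Ω) [IsProbabilityMeasure μ]
    (S : Ω → σ) (T : Ω → τ) (C : Ω → γc) (W : Ω → γe)
    (hS : Measurable S) (hT : Measurable T) (hC : Measurable C) (hW : Measurable W)
    (hWC : CondIndepFun (MeasurableSpace.comap (fun ω => (S ω, T ω)) inferInstance)
      ((hS.prodMk hT).comap_le) W C μ)
    (hκ : ∀ᵐ q ∂(μ.map fun ω => (S ω, T ω)),
      condDistrib W (fun ω => (S ω, T ω)) μ q = κ q)
    {As : Set σ} {Ac : Set γc} {At : Set τ} {B : Set γe}
    (hAs : MeasurableSet As) (hAc : MeasurableSet Ac) (hAt : MeasurableSet At)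
    (hB : MeasurableSet B) :
    μ (S ⁻¹' As ∩ C ⁻¹' Ac ∩ T ⁻¹' At ∩ W ⁻¹' B)
      = ∫⁻ ω in S ⁻¹' As ∩ C ⁻¹' Ac ∩ T ⁻¹' At, κ (S ω, T ω) B ∂μ := by
  have hm : MeasurableSpace.comap (fun ω => (S ω, T ω)) inferInstance ≤ _ :=
    (hS.prodMk hT).comap_le
  set E : Set Ω := S ⁻¹' As ∩ T ⁻¹' At with hE_def
  set F : Set Ω := C ⁻¹' Ac with hF_def
  have hEm : MeasurableSet[MeasurableSpace.comap (fun ω => (S ω, T ω)) inferInstance] E :=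
    ⟨As ×ˢ At, hAs.prod hAt, by rw [Set.mk_preimage_prod]⟩
  have hE : MeasurableSet E := hm _ hEm
  have hF : MeasurableSet F := hC hAc
  have hG : MeasurableSet (W ⁻¹' B) := hW hB
  set ℓ : Ω → ℝ≥0∞ := fun ω => κ (S ω, T ω) B with hℓ_def
  have hℓ : Measurable ℓ := (Kernel.measurable_coe κ hB).comp (hS.prodMk hT)
  have hℓm : Measurable[MeasurableSpace.comap (fun ω => (S ω, T ω)) inferInstance] ℓ :=
    (Kernel.measurable_coe κ hB).comp (Measurable.of_comap_le le_rfl)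
  set g : Ω → ℝ := fun ω => (ℓ ω).toReal with hg_def
  have hgm : StronglyMeasurable[MeasurableSpace.comap (fun ω => (S ω, T ω)) inferInstance] g :=
    (Measurable.ennreal_toReal hℓm).stronglyMeasurable
  have hgbound : ∀ ω, ‖g ω‖ ≤ 1 := by
    intro ω
    rw [Real.norm_eq_abs, abs_of_nonneg ENNReal.toReal_nonneg]
    calc (ℓ ω).toReal ≤ (1 : ℝ≥0∞).toReal :=
          ENNReal.toReal_mono ENNReal.one_ne_top prob_le_one
      _ = 1 := ENNReal.toReal_one
  have hg_int : Integrable g μ :=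
    (integrable_const (1 : ℝ)).mono' (hgm.mono hm).aestronglyMeasurable (ae_of_all _ hgbound)
  -- conditional expectation identities
  have h2 : μ⟦W ⁻¹' B | MeasurableSpace.comap (fun ω => (S ω, T ω)) inferInstance⟧ =ᵐ[μ] g := by
    have hcd := condDistrib_ae_eq_condExp (μ := μ) (hS.prodMk hT) hW hB
    have hκ' : ∀ᵐ ω ∂μ,
        condDistrib W (fun ω => (S ω, T ω)) μ (S ω, T ω) = κ (S ω, T ω) :=
      ae_of_ae_map (hS.prodMk hT).aemeasurable hκ
    filter_upwards [hcd, hκ'] with ω h1 hk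
    rw [← h1]
    simp only [hg_def, hℓ_def, hk, Measure.real_def]
  have hmul := (condIndepFun_iff_condExp_inter_preimage_eq_mul (μ := μ)
      (hm' := hm) hW hC).mp hWC B Ac hB hAc
  -- LHS
  have hseteq1 : S ⁻¹' As ∩ C ⁻¹' Ac ∩ T ⁻¹' At ∩ W ⁻¹' B = E ∩ (W ⁻¹' B ∩ F) := by
    ext ω; simp only [hE_def, hF_def, Set.mem_inter_iff, Set.mem_preimage]; tauto
  have hseteq2 : S ⁻¹' As ∩ C ⁻¹' Ac ∩ T ⁻¹' At = E ∩ F := by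
    ext ω; simp only [hE_def, hF_def, Set.mem_inter_iff, Set.mem_preimage]; tauto
  rw [hseteq1, hseteq2]
  have hind_int : Integrable ((W ⁻¹' B ∩ F).indicator (fun _ => (1 : ℝ))) μ :=
    (integrable_const 1).indicator (hG.inter hF)
  have hindF_int : Integrable (F.indicator (fun _ => (1 : ℝ))) μ :=
    (integrable_const 1).indicator hF
  have lhs_eq : (μ (E ∩ (W ⁻¹' B ∩ F))).toReal
      = ∫ ω in E, (fun ω => g ω *
          (μ⟦F | MeasurableSpace.comap (fun ω => (S ω, T ω)) inferInstance⟧) ω) ω ∂μ := by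
    have h1 : (μ (E ∩ (W ⁻¹' B ∩ F))).toReal
        = ∫ ω in E, ((W ⁻¹' B ∩ F).indicator (fun _ => (1 : ℝ))) ω ∂μ := by
      rw [setIntegral_indicator (hG.inter hF), setIntegral_const, smul_eq_mul, mul_one,
        Set.inter_comm E, Measure.real_def]
    rw [h1, ← setIntegral_condExp hm hind_int hEm]
    refine setIntegral_congr_ae hE ?_
    filter_upwards [hmul, h2] with ω hω h2ω
    intro _
    rw [hω, h2ω]
  have rhs_ne_top : ∫⁻ ω in E ∩ F, ℓ ω ∂μ ≠ ⊤ := by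
    refine ne_of_lt (lt_of_le_of_lt ?_ (lt_of_le_of_lt (measure_mono (Set.subset_univ (E ∩ F)))
      (measure_lt_top μ Set.univ)))
    calc ∫⁻ ω in E ∩ F, ℓ ω ∂μ ≤ ∫⁻ _ in E ∩ F, 1 ∂μ :=
          lintegral_mono fun ω => prob_le_one
      _ = μ (E ∩ F) := setLIntegral_one _
  have rhs_eq : (∫⁻ ω in E ∩ F, ℓ ω ∂μ).toReal
      = ∫ ω in E, (fun ω => g ω *
          (μ⟦F | MeasurableSpace.comap (fun ω => (S ω, T ω)) inferInstance⟧) ω) ω ∂μ := by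
    have h1 : (∫⁻ ω in E ∩ F, ℓ ω ∂μ).toReal = ∫ ω in E ∩ F, g ω ∂μ :=
      (integral_toReal hℓ.aemeasurable.restrict
        (ae_of_all _ fun ω => measure_lt_top _ _)).symm
    have hmulfun : (g * F.indicator (fun _ => (1 : ℝ))) = F.indicator g := by
      funext ω
      by_cases hω : ω ∈ F <;> simp [Set.indicator_apply, hω]
    have hprod_int : Integrable (g * F.indicator (fun _ => (1 : ℝ))) μ :=
      hindF_int.bdd_mul (hgm.mono hm).aestronglyMeasurable (c := 1) (ae_of_all _ hgbound)
    rw [h1, ← setIntegral_indicator hF, ← hmulfun,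
      ← setIntegral_condExp hm hprod_int hEm]
    refine setIntegral_congr_ae hE ?_
    filter_upwards [condExp_mul_of_stronglyMeasurable_left hgm hprod_int hindF_int] with ω hω
    intro _
    rw [hω]
    rfl
  exact (ENNReal.toReal_eq_toReal_iff' (measure_ne_top μ _) rhs_ne_top).mp (by rw [lhs_eq, rhs_eq])

lemma key_stationary (κ : Kernel (σ × τ) γe) [IsMarkovKernel κ]
    (μ : Measure Ω) [IsProbabilityMeasure μ]
    (S : Ω → σ) (T : Ω → τ) (C : Ω → γc) (W : Ω → γe)
    (hS : Measurable S) (hT : Measurable T) (hC : Measurable C) (hW : Measurable W)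
    (hWC : CondIndepFun (MeasurableSpace.comap (fun ω => (S ω, T ω)) inferInstance)
      ((hS.prodMk hT).comap_le) W C μ)
    (hκ : ∀ᵐ q ∂(μ.map fun ω => (S ω, T ω)),
      condDistrib W (fun ω => (S ω, T ω)) μ q = κ q) :
    ∀ᵐ p ∂(μ.map fun ω => (S ω, C ω, T ω)),
      condDistrib (fun ω => (C ω, W ω, T ω)) (fun ω => (S ω, C ω, T ω)) μ p
        = (Measure.dirac p.2.1).prod ((κ (p.1, p.2.2)).prod (Measure.dirac p.2.2)) := by
  have hX : Measurable (fun ω => (S ω, C ω, T ω)) := hS.prodMk (hC.prodMk hT)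
  have hY : Measurable (fun ω => (C ω, W ω, T ω)) := hC.prodMk (hW.prodMk hT)
  set η : Kernel (σ × γc × τ) (γc × γe × τ) :=
    (Kernel.deterministic (fun p : σ × γc × τ => p.2.1) measurable_snd.fst) ×ₖ
      ((κ.comap (fun p : σ × γc × τ => (p.1, p.2.2))
          (measurable_fst.prodMk measurable_snd.snd)) ×ₖ
        (Kernel.deterministic (fun p : σ × γc × τ => p.2.2) measurable_snd.snd)) with hη_def
  haveI : IsMarkovKernel η := by rw [hη_def]; infer_instance
  have hη : ∀ p : σ × γc × τ,
      η p = (Measure.dirac p.2.1).prod ((κ (p.1, p.2.2)).prod (Measure.dirac p.2.2)) := by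
    intro p
    rw [hη_def, Kernel.prod_apply, Kernel.prod_apply, Kernel.deterministic_apply,
      Kernel.deterministic_apply, Kernel.comap_apply]
  -- measurability of the fiber function
  have hκmeas : ∀ {B₂ : Set γe}, MeasurableSet B₂ →
      Measurable (fun x : σ × γc × τ => κ (x.1, x.2.2) B₂) := fun hB₂ =>
    (Kernel.measurable_coe κ hB₂).comp (measurable_fst.prodMk measurable_snd.snd)
  have hmain : μ.map (fun ω => ((S ω, C ω, T ω), (C ω, W ω, T ω)))
      = (μ.map fun ω => (S ω, C ω, T ω)) ⊗ₘ η := by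
    refine ext_of_generate_finite
      (image2 (· ×ˢ ·)
        (image2 (· ×ˢ ·) { s : Set σ | MeasurableSet s }
          (image2 (· ×ˢ ·) { s : Set γc | MeasurableSet s } { s : Set τ | MeasurableSet s }))
        (image2 (· ×ˢ ·) { s : Set γc | MeasurableSet s }
          (image2 (· ×ˢ ·) { s : Set γe | MeasurableSet s } { s : Set τ | MeasurableSet s })))
      ?_ ?_ ?_ ?_
    · refine (generateFrom_eq_prod ?_ ?_ ?_ ?_).symm
      · exact generateFrom_eq_prod generateFrom_measurableSet
          (generateFrom_eq_prod generateFrom_measurableSet generateFrom_measurableSet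
            isCountablySpanning_measurableSet isCountablySpanning_measurableSet)
          isCountablySpanning_measurableSet
          (isCountablySpanning_measurableSet.prod isCountablySpanning_measurableSet)
      · exact generateFrom_eq_prod generateFrom_measurableSet
          (generateFrom_eq_prod generateFrom_measurableSet generateFrom_measurableSet
            isCountablySpanning_measurableSet isCountablySpanning_measurableSet)
          isCountablySpanning_measurableSet
          (isCountablySpanning_measurableSet.prod isCountablySpanning_measurableSet)
      · exact isCountablySpanning_measurableSet.prod
          (isCountablySpanning_measurableSet.prod isCountablySpanning_measurableSet)
      · exact isCountablySpanning_measurableSet.prod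
          (isCountablySpanning_measurableSet.prod isCountablySpanning_measurableSet)
    · exact (isPiSystem_measurableSet.prod
          (isPiSystem_measurableSet.prod isPiSystem_measurableSet)).prod
        (isPiSystem_measurableSet.prod (isPiSystem_measurableSet.prod isPiSystem_measurableSet))
    · rintro _ ⟨_, ⟨As, hAs, _, ⟨Ac, hAc, At, hAt, rfl⟩, rfl⟩, _,
        ⟨B₁, hB₁, _, ⟨B₂, hB₂, B₃, hB₃, rfl⟩, rfl⟩, rfl⟩
      simp only [Set.mem_setOf_eq] at hAs hAc hAt hB₁ hB₂ hB₃
      have hA : MeasurableSet (As ×ˢ Ac ×ˢ At) := hAs.prod (hAc.prod hAt)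
      have hBmeas : MeasurableSet (B₁ ×ˢ B₂ ×ˢ B₃) := hB₁.prod (hB₂.prod hB₃)
      rw [Measure.map_apply (hX.prodMk hY) (hA.prod hBmeas),
        Measure.compProd_apply_prod hA hBmeas]
      -- compute the η-integral
      have hη_int : ∀ x : σ × γc × τ, x ∈ As ×ˢ Ac ×ˢ At →
          η x (B₁ ×ˢ B₂ ×ˢ B₃)
            = (As ×ˢ (Ac ∩ B₁) ×ˢ (At ∩ B₃)).indicator
                (fun x : σ × γc × τ => κ (x.1, x.2.2) B₂) x := by
        intro x hx
        rw [hη x, Measure.prod_prod, Measure.prod_prod, Measure.dirac_apply' _ hB₁,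
          Measure.dirac_apply' _ hB₃]
        simp only [Set.mem_prod] at hx
        obtain ⟨hx1, hx2, hx3⟩ := hx
        by_cases h1 : x.2.1 ∈ B₁ <;> by_cases h3 : x.2.2 ∈ B₃ <;>
          simp [Set.indicator_apply, Set.mem_prod, hx1, hx2, hx3, h1, h3]
      rw [setLIntegral_congr_fun hA hη_int, ← lintegral_indicator hA]
      have hindeq : (As ×ˢ Ac ×ˢ At).indicator
            ((As ×ˢ (Ac ∩ B₁) ×ˢ (At ∩ B₃)).indicator
              (fun x : σ × γc × τ => κ (x.1, x.2.2) B₂))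
          = (As ×ˢ (Ac ∩ B₁) ×ˢ (At ∩ B₃)).indicator
              (fun x : σ × γc × τ => κ (x.1, x.2.2) B₂) := by
        funext x
        by_cases hx' : x ∈ As ×ˢ Ac ×ˢ At
        · rw [Set.indicator_of_mem hx']
        · have hx : x ∉ As ×ˢ (Ac ∩ B₁) ×ˢ (At ∩ B₃) := fun h => hx' (by
            simp only [Set.mem_prod, Set.mem_inter_iff] at h ⊢; tauto)
          rw [Set.indicator_of_notMem hx', Set.indicator_of_notMem hx]
      rw [hindeq, lintegral_indicator (hAs.prod ((hAc.inter hB₁).prod (hAt.inter hB₃))),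
        setLIntegral_map (hAs.prod ((hAc.inter hB₁).prod (hAt.inter hB₃))) (hκmeas hB₂) hX]
      have hpre1 : (fun ω => ((S ω, C ω, T ω), (C ω, W ω, T ω))) ⁻¹'
            ((As ×ˢ Ac ×ˢ At) ×ˢ B₁ ×ˢ B₂ ×ˢ B₃)
          = S ⁻¹' As ∩ C ⁻¹' (Ac ∩ B₁) ∩ T ⁻¹' (At ∩ B₃) ∩ W ⁻¹' B₂ := by
        ext ω
        simp only [Set.mem_preimage, Set.mem_prod, Set.mem_inter_iff]
        tauto
      have hpre2 : (fun ω => (S ω, C ω, T ω)) ⁻¹' (As ×ˢ (Ac ∩ B₁) ×ˢ (At ∩ B₃))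
          = S ⁻¹' As ∩ C ⁻¹' (Ac ∩ B₁) ∩ T ⁻¹' (At ∩ B₃) := by
        ext ω
        simp only [Set.mem_preimage, Set.mem_prod, Set.mem_inter_iff]
        tauto
      rw [hpre1, hpre2]
      exact star_rect κ μ S T C W hS hT hC hW hWC hκ hAs (hAc.inter hB₁) (hAt.inter hB₃) hB₂
    · rw [Measure.map_apply (hX.prodMk hY) MeasurableSet.univ,
        Measure.compProd_apply_univ, Measure.map_apply hX MeasurableSet.univ,
        Set.preimage_univ, Set.preimage_univ]
  have h := condDistrib_ae_eq_of_measure_eq_compProd _ hY.aemeasurable hmain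
  filter_upwards [h] with p hp
  rw [hp, hη]

end Aux

/-- Stationarity conclusion of Proposition 2: for two (possibly different) joint laws during
training, if in both cases the environment part evolves conditionally independently of the
controllable part given `(state, desired time)` with the same environment kernel `κ`, then both
relabeled high-level conditional distributions coincide almost everywhere with one and the same
stationary kernel `(s, c, t) ↦ δ_c ⊗ κ (s, t) ⊗ δ_t`. -/
theorem condDistrib_timed_subgoal_stationary
    {σ τ γc γe : Type*}
    [MeasurableSpace σ] [StandardBorelSpace σ] [Nonempty σ]
    [MeasurableSpace τ] [StandardBorelSpace τ] [Nonempty τ]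
    [MeasurableSpace γc] [StandardBorelSpace γc] [Nonempty γc]
    [MeasurableSpace γe] [StandardBorelSpace γe] [Nonempty γe]
    (κ : Kernel (σ × τ) γe) [IsMarkovKernel κ]
    {Ω₁ Ω₂ : Type*}
    [MeasurableSpace Ω₁] [StandardBorelSpace Ω₁]
    [MeasurableSpace Ω₂] [StandardBorelSpace Ω₂]
    (μ₁ : Measure Ω₁) [IsProbabilityMeasure μ₁]
    (μ₂ : Measure Ω₂) [IsProbabilityMeasure μ₂]
    (S₁ : Ω₁ → σ) (T₁ : Ω₁ → τ) (C₁ : Ω₁ → γc) (W₁ : Ω₁ → γe)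
    (hS₁ : Measurable S₁) (hT₁ : Measurable T₁) (hC₁ : Measurable C₁) (hW₁ : Measurable W₁)
    (S₂ : Ω₂ → σ) (T₂ : Ω₂ → τ) (C₂ : Ω₂ → γc) (W₂ : Ω₂ → γe)
    (hS₂ : Measurable S₂) (hT₂ : Measurable T₂) (hC₂ : Measurable C₂) (hW₂ : Measurable W₂)
    (hWC₁ : CondIndepFun
      (MeasurableSpace.comap (fun ω => (S₁ ω, T₁ ω)) inferInstance)
      ((hS₁.prodMk hT₁).comap_le) W₁ C₁ μ₁)
    (hWC₂ : CondIndepFun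
      (MeasurableSpace.comap (fun ω => (S₂ ω, T₂ ω)) inferInstance)
      ((hS₂.prodMk hT₂).comap_le) W₂ C₂ μ₂)
    (hκ₁ : ∀ᵐ q ∂(μ₁.map fun ω => (S₁ ω, T₁ ω)),
      condDistrib W₁ (fun ω => (S₁ ω, T₁ ω)) μ₁ q = κ q)
    (hκ₂ : ∀ᵐ q ∂(μ₂.map fun ω => (S₂ ω, T₂ ω)),
      condDistrib W₂ (fun ω => (S₂ ω, T₂ ω)) μ₂ q = κ q) :
    (∀ᵐ p ∂(μ₁.map fun ω => (S₁ ω, C₁ ω, T₁ ω)),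
      condDistrib (fun ω => (C₁ ω, W₁ ω, T₁ ω)) (fun ω => (S₁ ω, C₁ ω, T₁ ω)) μ₁ p
        = (Measure.dirac p.2.1).prod
            ((κ (p.1, p.2.2)).prod (Measure.dirac p.2.2))) ∧
    (∀ᵐ p ∂(μ₂.map fun ω => (S₂ ω, C₂ ω, T₂ ω)),
      condDistrib (fun ω => (C₂ ω, W₂ ω, T₂ ω)) (fun ω => (S₂ ω, C₂ ω, T₂ ω)) μ₂ p
        = (Measure.dirac p.2.1).prod
            ((κ (p.1, p.2.2)).prod (Measure.dirac p.2.2))) := by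
  exact ⟨key_stationary κ μ₁ S₁ T₁ C₁ W₁ hS₁ hT₁ hC₁ hW₁ hWC₁ hκ₁,
    key_stationary κ μ₂ S₂ T₂ C₂ W₂ hS₂ hT₂ hC₂ hW₂ hWC₂ hκ₂⟩
end
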